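/- Let n > 2 be an integer and let Σ be an alphabet with at most two letters. For every regular language L over Σ with sc(L) = n, the square root satisfies the strict inequality sc(√L) < n^n − n(n−1)/2. -/

import Mathlib

/-- `L` is recognized by some complete DFA with exactly `n` states. -/
def recognizedBy {α : Type} (L : Language α) (n : ℕ) : Prop :=
  ∃ M : DFA α (Fin n), M.accepts = L

/-- The state complexity of a language: the minimal number of states of a
complete DFA recognizing it. -/
noncomputable def sc {α : Type} (L : Language α) : ℕ :=
  sInf {n | recognizedBy L n}

/-- The square root of a language: `√L = {w | w·w ∈ L}`. -/
def sqrtLang {α : Type} (L : Language α) : Language α :=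
  {w | w ++ w ∈ L}

open Function

namespace Stmt12Aux

/-! ### arithmetic lemmas -/

lemma card_bij (n : ℕ) :
    Fintype.card {f : Fin n → Fin n // Bijective f} = n.factorial := by
  classical
  have e : Equiv.Perm (Fin n) ≃ {f : Fin n → Fin n // Bijective f} :=
    { toFun := fun p => ⟨p, p.bijective⟩
      invFun := fun f => Equiv.ofBijective f.1 f.2
      left_inv := fun p => by ext q; simp
      right_inv := fun f => by ext q; simp }
  rw [← Fintype.card_congr e, Fintype.card_perm, Fintype.card_fin]

lemma card_nonbij (n : ℕ) :
    Nat.card {f : Fin n → Fin n // ¬ Bijective f} = n ^ n - n.factorial := by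
  classical
  rw [Nat.card_eq_fintype_card, Fintype.card_subtype_compl, card_bij]
  congr 1
  simp [Fintype.card_fun]

lemma le_two_pow_pred {m : ℕ} (hm : 1 ≤ m) : m ≤ 2 ^ (m - 1) := by
  obtain ⟨k, rfl⟩ : ∃ k, m = k + 1 := ⟨m - 1, by omega⟩
  simpa using Nat.lt_two_pow_self (n := k)

lemma multiset_lcm_dvd_prod (s : Multiset ℕ) : s.lcm ∣ s.prod := by
  induction s using Multiset.induction with
  | empty => simp
  | cons a s ih =>
      rw [Multiset.lcm_cons, Multiset.prod_cons]
      exact lcm_dvd (Dvd.intro _ rfl) (ih.mul_left a)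

lemma multiset_prod_le (s : Multiset ℕ) (hs : ∀ a ∈ s, 2 ≤ a) :
    s.prod ≤ 2 ^ (s.sum - Multiset.card s) ∧ Multiset.card s ≤ s.sum := by
  induction s using Multiset.induction with
  | empty => simp
  | cons a s ih =>
      have ha : 2 ≤ a := hs a (Multiset.mem_cons_self a s)
      obtain ⟨ih1, ih2⟩ := ih (fun b hb => hs b (Multiset.mem_cons_of_mem hb))
      constructor
      · rw [Multiset.prod_cons, Multiset.sum_cons, Multiset.card_cons]
        calc a * s.prod ≤ 2 ^ (a - 1) * 2 ^ (s.sum - Multiset.card s) :=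
              Nat.mul_le_mul (le_two_pow_pred (by omega)) ih1
          _ = 2 ^ (a - 1 + (s.sum - Multiset.card s)) := (pow_add 2 _ _).symm
          _ ≤ 2 ^ (a + s.sum - (Multiset.card s + 1)) := by
              apply Nat.pow_le_pow_right (by norm_num); omega
      · rw [Multiset.sum_cons, Multiset.card_cons]; omega

lemma orderOf_perm_le (n : ℕ) (hn : 1 ≤ n) (π : Equiv.Perm (Fin n)) :
    orderOf π ≤ 2 ^ (n - 1) := by
  classical
  have h1 : π.cycleType.lcm = orderOf π := Equiv.Perm.lcm_cycleType π
  obtain ⟨h2, h3⟩ := multiset_prod_le π.cycleType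
    (fun a ha => Equiv.Perm.two_le_of_mem_cycleType ha)
  have h4 : π.cycleType.sum ≤ n := by
    rw [Equiv.Perm.sum_cycleType]
    simpa using Finset.card_le_univ π.support
  have h5 : orderOf π ≤ π.cycleType.prod := by
    rw [← h1]
    refine Nat.le_of_dvd ?_ (multiset_lcm_dvd_prod _)
    exact Multiset.prod_pos (fun a ha => by
      have := Equiv.Perm.two_le_of_mem_cycleType ha; omega)
  refine h5.trans (h2.trans ?_)
  apply Nat.pow_le_pow_right (by norm_num)
  rcases Nat.eq_zero_or_pos (Multiset.card π.cycleType) with h | h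
  · have h0 : π.cycleType = 0 := Multiset.card_eq_zero.mp h
    simp [h0]
  · omega

lemma factorial_le_pow_pred : ∀ m : ℕ, (m + 1).factorial ≤ (m + 1) ^ m := by
  intro m
  induction m with
  | zero => simp
  | succ k ih =>
      calc (k + 2).factorial = (k + 2) * (k + 1).factorial := rfl
        _ ≤ (k + 2) * (k + 1) ^ k := Nat.mul_le_mul_left _ ih
        _ ≤ (k + 2) * (k + 2) ^ k := by
            exact Nat.mul_le_mul_left _ (Nat.pow_le_pow_left (by omega) k)
        _ = (k + 2) ^ (k + 1) := by ring

lemma arith1 (n : ℕ) (hn : 3 ≤ n) : n.factorial + n * (n - 1) / 2 < n ^ n := by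
  obtain ⟨m, rfl⟩ : ∃ m, n = m + 3 := ⟨n - 3, by omega⟩
  have h1 : (m + 3).factorial ≤ (m + 3) ^ (m + 2) := factorial_le_pow_pred (m + 2)
  have h2 : (m + 3) * (m + 3 - 1) / 2 ≤ (m + 3) * (m + 3) := by
    have : (m + 3) * (m + 3 - 1) ≤ (m + 3) * (m + 3) := Nat.mul_le_mul_left _ (by omega)
    omega
  have h3 : (m + 3) * (m + 3) ≤ (m + 3) ^ (m + 2) := by
    calc (m + 3) * (m + 3) = (m + 3) ^ 2 := (sq (m+3)).symm
      _ ≤ (m + 3) ^ (m + 2) := Nat.pow_le_pow_right (by omega) (by omega)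
  have h5 : 0 < (m + 3) ^ (m + 2) := Nat.pow_pos (by omega)
  calc (m + 3).factorial + (m + 3) * (m + 3 - 1) / 2
      ≤ (m + 3) ^ (m + 2) + (m + 3) ^ (m + 2) := Nat.add_le_add h1 (h2.trans h3)
    _ = 2 * (m + 3) ^ (m + 2) := by ring
    _ < (m + 3) * (m + 3) ^ (m + 2) :=
        Nat.mul_lt_mul_of_lt_of_le (by omega) (le_refl _) h5
    _ = (m + 3) ^ (m + 3) := by ring

lemma arith2d (k : ℕ) : 2 ^ (k + 4) + (k + 4) * (k + 3) < 2 * (k + 4).factorial := by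
  induction k with
  | zero => decide
  | succ m ih =>
      have e4 : (m + 1 + 4).factorial = (m + 5) * (m + 4).factorial := rfl
      have hf : 24 ≤ (m + 4).factorial := by
        calc (24:ℕ) = (4:ℕ).factorial := rfl
          _ ≤ (m + 4).factorial := Nat.factorial_le (by omega)
      have epow : (2:ℕ) ^ (m + 1 + 4) = 2 * 2 ^ (m + 4) := by ring
      have h1 : 2 * (m + 4) ≤ (m + 4) * (m + 3) := by nlinarith
      have h2 : (m + 1 + 4) * (m + 1 + 3) = (m + 4) * (m + 3) + 2 * (m + 4) := by ring
      calc 2 ^ (m + 1 + 4) + (m + 1 + 4) * (m + 1 + 3)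
          = 2 * 2 ^ (m + 4) + ((m + 4) * (m + 3) + 2 * (m + 4)) := by rw [epow, h2]
        _ ≤ 2 * (2 ^ (m + 4) + (m + 4) * (m + 3)) := by omega
        _ < 2 * (2 * (m + 4).factorial) := by omega
        _ ≤ 2 * ((m + 5) * (m + 4).factorial) := by nlinarith
        _ = 2 * (m + 1 + 4).factorial := by rw [e4]

lemma arith2 (n : ℕ) (hn : 4 ≤ n) : 2 ^ (n - 1) + n * (n - 1) / 2 < n.factorial := by
  obtain ⟨k, rfl⟩ : ∃ k, n = k + 4 := ⟨n - 4, by omega⟩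
  have h := arith2d k
  have e1 : k + 4 - 1 = k + 3 := by omega
  have e2 : (2:ℕ) ^ (k + 4) = 2 * 2 ^ (k + 3) := by ring
  rw [e1]
  rw [e2] at h
  omega

lemma arith3d (k : ℕ) : 2 + (k + 3) * (k + 2) < 2 * (k + 3).factorial := by
  have e : (k + 3).factorial = (k + 3) * ((k + 2) * (k + 1).factorial) := rfl
  have h1 : 1 ≤ (k + 1).factorial := Nat.factorial_pos _
  have h2 : (k + 3) * ((k + 2) * 1) ≤ (k + 3) * ((k + 2) * (k + 1).factorial) :=
    Nat.mul_le_mul_left _ (Nat.mul_le_mul_left _ h1)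
  rw [e]
  nlinarith

lemma arith3 (n : ℕ) (hn : 3 ≤ n) : 1 + n * (n - 1) / 2 < n.factorial := by
  obtain ⟨k, rfl⟩ : ∃ k, n = k + 3 := ⟨n - 3, by omega⟩
  have h := arith3d k
  have e1 : k + 3 - 1 = k + 2 := by omega
  rw [e1]
  omega

/-- In a type of cardinality at most two, two elements different from a third
element are equal. -/
lemma eq_of_card_le_two {Γ : Type} [Fintype Γ] (h : Fintype.card Γ ≤ 2) {x y z : Γ}
    (hxz : x ≠ z) (hyz : y ≠ z) : x = y := by
  classical
  by_contra hxy
  have h3 : ({x, y, z} : Finset Γ).card = 3 := by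
    rw [Finset.card_insert_of_notMem (by simp [hxy, hxz]),
      Finset.card_insert_of_notMem (by simp [hyz]), Finset.card_singleton]
  have h4 : ({x, y, z} : Finset Γ).card ≤ Fintype.card Γ := Finset.card_le_univ _
  omega

/-! ### the witness pair for the three-state case -/

/-- witness pair of non-bijective transformations of `Fin 3` merging for a
given boolean predicate -/
def W3 (p : Fin 3 → Bool) : (Fin 3 → Fin 3) × (Fin 3 → Fin 3) :=
  if p 0 = p 1 then (![0,0,1], ![1,1,0])
  else if p 0 = p 2 then (![0,1,0], ![1,0,1])
  else (![0,1,1], ![1,0,0])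

lemma key3bool : ∀ p : Fin 3 → Bool,
    ¬ Bijective (W3 p).1 ∧ ¬ Bijective (W3 p).2 ∧ (W3 p).1 ≠ (W3 p).2 ∧
    ∀ (h : Fin 3 → Fin 3) (q : Fin 3),
      p (h ((W3 p).1 (h ((W3 p).1 q)))) = p (h ((W3 p).2 (h ((W3 p).2 q)))) := by
  decide

/-! ### the square-root automaton -/

variable {Γ : Type} {n : ℕ} (M : DFA Γ (Fin n))

/-- transition function of a letter -/
def tr (σ : Γ) : Fin n → Fin n := fun q => M.step q σ

/-- transformation induced by a word -/
def TT (w : List Γ) : Fin n → Fin n := fun q => M.evalFrom q w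

lemma TT_nil : TT M [] = fun q => q := rfl

lemma TT_cons (σ : Γ) (w : List Γ) : TT M (σ :: w) = TT M w ∘ tr M σ := rfl

lemma TT_append (u v : List Γ) : TT M (u ++ v) = TT M v ∘ TT M u := by
  funext q
  simp [TT, DFA.evalFrom_of_append]

/-- the set of word transformations -/
def RS : Set (Fin n → Fin n) := Set.range (TT M)

lemma id_mem_RS : (fun q => q) ∈ RS M := ⟨[], rfl⟩

lemma comp_mem_RS {f : Fin n → Fin n} (hf : f ∈ RS M) (w : List Γ) :
    TT M w ∘ f ∈ RS M := by
  obtain ⟨u, rfl⟩ := hf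
  exact ⟨u ++ w, TT_append M u w⟩

lemma comp_tr_mem_RS {h : Fin n → Fin n} (hh : h ∈ RS M) (σ : Γ) :
    h ∘ tr M σ ∈ RS M := by
  obtain ⟨v, rfl⟩ := hh
  exact ⟨σ :: v, (TT_cons M σ v)⟩

/-- language equivalence of reachable states of the square-root automaton -/
def st : Setoid ↥(RS M) where
  r f g := ∀ h ∈ RS M,
    (h (f.1 (h (f.1 M.start))) ∈ M.accept ↔ h (g.1 (h (g.1 M.start))) ∈ M.accept)
  iseqv := by
    constructor
    · intro f h _; rfl
    · intro f g hfg h hh; exact (hfg h hh).symm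
    · intro f g k h1 h2 h hh; exact (h1 h hh).trans (h2 h hh)

/-- the square-root DFA on language-equivalence classes of reachable
transformations -/
def sqD : DFA Γ (Quotient (st M)) where
  step c σ := Quotient.liftOn c
      (fun f => (⟦⟨tr M σ ∘ f.1, by
        exact comp_mem_RS M f.2 [σ]⟩⟧ : Quotient (st M)))
      (by
        intro f g hfg
        refine Quotient.sound ?_
        intro h hh
        exact hfg (h ∘ tr M σ) (comp_tr_mem_RS M hh σ))
  start := ⟦⟨fun q => q, id_mem_RS M⟩⟧
  accept := {c | Quotient.liftOn c (fun f => f.1 (f.1 M.start) ∈ M.accept)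
      (by
        intro f g hfg
        exact propext (hfg (fun q => q) (id_mem_RS M)))}

lemma sqD_evalFrom (w : List Γ) (f : ↥(RS M)) :
    (sqD M).evalFrom ⟦f⟧ w = ⟦⟨TT M w ∘ f.1, comp_mem_RS M f.2 w⟩⟧ := by
  induction w generalizing f with
  | nil => rfl
  | cons σ w ih =>
      have h1 : (sqD M).evalFrom ⟦f⟧ (σ :: w)
          = (sqD M).evalFrom ((sqD M).step ⟦f⟧ σ) w := rfl
      rw [h1]
      show (sqD M).evalFrom ⟦(⟨tr M σ ∘ f.1, _⟩ : ↥(RS M))⟧ w = _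
      rw [ih]
      congr 1

lemma sqD_eval (w : List Γ) :
    (sqD M).eval w = ⟦⟨TT M w, ⟨w, rfl⟩⟩⟧ := by
  have h0 : (sqD M).eval w = (sqD M).evalFrom ⟦⟨fun q => q, id_mem_RS M⟩⟧ w := rfl
  rw [h0, sqD_evalFrom]
  rfl

lemma accepts_sqD : (sqD M).accepts = sqrtLang M.accepts := by
  ext w
  rw [DFA.mem_accepts, sqD_eval]
  show TT M w (TT M w M.start) ∈ M.accept ↔ _
  have h2 : (w ++ w) ∈ M.accepts ↔ M.evalFrom M.start (w ++ w) ∈ M.accept := Iff.rfl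
  show _ ↔ w ++ w ∈ M.accepts
  rw [h2, DFA.evalFrom_of_append]
  rfl

/-! ### reachable bijective transformations -/

lemma allbij_TT (hall : ∀ σ : Γ, Bijective (tr M σ)) (w : List Γ) :
    Bijective (TT M w) := by
  induction w with
  | nil => exact bijective_id
  | cons σ w ih => exact ih.comp (hall σ)

lemma bij_TT_pow (π : Equiv.Perm (Fin n))
    (hπ : ∀ σ : Γ, Bijective (tr M σ) → tr M σ = ⇑π) :
    ∀ w : List Γ, Bijective (TT M w) → ∃ k : ℕ, TT M w = ⇑(π ^ k) := by
  intro w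
  induction w with
  | nil => exact fun _ => ⟨0, by simp [TT_nil]; rfl⟩
  | cons σ w ih =>
      intro hb
      rw [TT_cons] at hb ⊢
      have hinj : Injective (tr M σ) := Injective.of_comp hb.1
      have hbσ : Bijective (tr M σ) := Finite.injective_iff_bijective.mp hinj
      have hsurj : Surjective (TT M w) := Surjective.of_comp hb.2
      have hbw : Bijective (TT M w) := Finite.surjective_iff_bijective.mp hsurj
      obtain ⟨k, hk⟩ := ih hbw
      refine ⟨k + 1, ?_⟩
      rw [hπ σ hbσ, hk]
      funext q
      simp [pow_succ]

/-! ### cardinality bounds -/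

/-- if recognized by a DFA on a finite type, `sc` is at most its cardinality -/
lemma sc_le_of_dfa {Γ : Type} {S : Type} [Finite S] (D : DFA Γ S) :
    sc D.accepts ≤ Nat.card S := by
  classical
  letI : Fintype S := Fintype.ofFinite S
  rw [Nat.card_eq_fintype_card]
  exact Nat.sInf_le ⟨DFA.reindex (Fintype.equivFin S) D, DFA.accepts_reindex _ _⟩

lemma nat_card_quotient_le {α : Type} [Finite α] (s : Setoid α) :
    Nat.card (Quotient s) ≤ Nat.card α :=
  Nat.card_le_card_of_surjective _ Quotient.mk_surjective

lemma nat_card_quotient_lt {α : Type} [Finite α] (s : Setoid α) {x y : α}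
    (h1 : x ≠ y) (h2 : s.r x y) : Nat.card (Quotient s) < Nat.card α := by
  classical
  letI : Fintype α := Fintype.ofFinite α
  rw [Nat.card_eq_fintype_card, Nat.card_eq_fintype_card]
  exact Fintype.card_lt_of_surjective_not_injective _ Quotient.mk_surjective
    (fun hi => h1 (hi (Quotient.sound h2)))

/-- the main cardinality bound -/
lemma main_card (hn : 3 ≤ n) [Fintype Γ] (hΓ2 : Fintype.card Γ ≤ 2) :
    Nat.card (Quotient (st M)) < n ^ n - n * (n - 1) / 2 := by
  classical
  obtain ⟨c, hc⟩ : ∃ c, n * (n - 1) / 2 = c := ⟨_, rfl⟩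
  have hquot := nat_card_quotient_le (st M)
  have hfle : n.factorial ≤ n ^ n := Nat.factorial_le_pow n
  by_cases hall : ∀ σ : Γ, Bijective (tr M σ)
  · -- all letters bijective: at most n! reachable states
    have hRS : Nat.card ↥(RS M) ≤ n.factorial := by
      rw [← card_bij n, ← Nat.card_eq_fintype_card]
      apply Nat.card_le_card_of_injective
        (fun f : ↥(RS M) => (⟨f.1, by
          obtain ⟨w, hw⟩ := f.2; exact hw ▸ allbij_TT M hall w⟩ :
            {f : Fin n → Fin n // Bijective f}))
      intro a b hab
      exact Subtype.ext (Subtype.mk_eq_mk.mp hab)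
    have := arith1 n hn
    omega
  · push_neg at hall
    obtain ⟨σ0, hσ0⟩ := hall
    by_cases hex : ∃ σ : Γ, Bijective (tr M σ)
    · obtain ⟨σ1, hσ1⟩ := hex
      set π : Equiv.Perm (Fin n) := Equiv.ofBijective _ hσ1 with hπdef
      have hπ : ∀ σ : Γ, Bijective (tr M σ) → tr M σ = ⇑π := by
        intro σ hσ
        have hσσ1 : σ = σ1 := by
          refine eq_of_card_le_two hΓ2 (z := σ0) ?_ ?_
          · intro h; exact hσ0 (h ▸ hσ)
          · intro h; exact hσ0 (h ▸ hσ1)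
        subst hσσ1
        rfl
      -- injection into zpowers ⊕ nonbijective
      have hmem_pow : ∀ f : ↥(RS M), (h : Bijective f.1) →
          Equiv.ofBijective f.1 h ∈ Subgroup.zpowers π := by
        intro f h
        obtain ⟨w, hw⟩ := f.2
        obtain ⟨k, hk⟩ := bij_TT_pow M π hπ w (hw ▸ h)
        have : Equiv.ofBijective f.1 h = π ^ k :=
          DFunLike.coe_injective (hw.symm.trans hk)
        rw [this]
        exact ⟨(k : ℤ), (zpow_natCast π k).symm ▸ rfl⟩
      have hRS : Nat.card ↥(RS M) ≤ orderOf π + (n ^ n - n.factorial) := by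
        rw [← Nat.card_zpowers, ← card_nonbij n, ← Nat.card_sum]
        apply Nat.card_le_card_of_injective
          (fun f : ↥(RS M) =>
            if h : Bijective f.1 then
              Sum.inl ⟨Equiv.ofBijective f.1 h, hmem_pow f h⟩
            else Sum.inr ⟨f.1, h⟩)
        intro a b hab
        by_cases ha : Bijective a.1 <;> by_cases hb : Bijective b.1 <;>
          simp only [ha, hb, dif_pos, dif_neg, not_false_iff] at hab
        · have h2 := Sum.inl.inj hab
          have h3 : Equiv.ofBijective a.1 ha = Equiv.ofBijective b.1 hb :=
            Subtype.mk_eq_mk.mp h2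
          exact Subtype.ext (congrArg (fun e : Equiv.Perm (Fin n) => ⇑e) h3)
        · exact absurd hab (by simp)
        · exact absurd hab (by simp)
        · exact Subtype.ext (Subtype.mk_eq_mk.mp (Sum.inr.inj hab))
      have hord := orderOf_perm_le n (by omega) π
      by_cases h3 : n = 3
      · subst h3
        -- order of π is at most 3
        have hdvd : orderOf π ∣ 6 := by
          have h6 : Fintype.card (Equiv.Perm (Fin 3)) = 6 := by
            rw [Fintype.card_perm]; rfl
          exact h6 ▸ orderOf_dvd_card
        have hord3 : orderOf π ≤ 3 := by
          by_cases h4 : orderOf π = 4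
          · rw [h4] at hdvd; norm_num at hdvd
          · have : (2:ℕ) ^ (3 - 1) = 4 := rfl
            omega
        by_cases hfull : ∀ f : Fin 3 → Fin 3, ¬ Bijective f → f ∈ RS M
        · -- all non-bijective maps reachable: use the merging pair
          set p : Fin 3 → Bool := fun v => if v ∈ M.accept then true else false with hp
          have hpiff : ∀ v : Fin 3, v ∈ M.accept ↔ p v = true := by
            intro v
            by_cases h : v ∈ M.accept <;> simp [hp, h]
          obtain ⟨hb1, hb2, hne, hkey⟩ := key3bool p
          have hx : (W3 p).1 ∈ RS M := hfull _ hb1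
          have hy : (W3 p).2 ∈ RS M := hfull _ hb2
          have hlt := nat_card_quotient_lt (st M)
            (x := ⟨(W3 p).1, hx⟩) (y := ⟨(W3 p).2, hy⟩)
            (by intro h; exact hne (congrArg Subtype.val h))
            (by
              intro h hh
              rw [hpiff, hpiff, hkey h M.start])
          have h24 : Nat.card ↥(RS M) ≤ 24 := by
            have : (3:ℕ) ^ 3 - Nat.factorial 3 = 21 := by norm_num [Nat.factorial]
            omega
          have : (3:ℕ) ^ 3 - 3 * (3 - 1) / 2 = 24 := by norm_num
          omega
        · -- some non-bijective map not reachable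
          push_neg at hfull
          obtain ⟨f0, hf0n, hf0⟩ := hfull
          have hRS' : Nat.card ↥(RS M) ≤ orderOf π + 20 := by
            have hcard20 :
                Nat.card {f : Fin 3 → Fin 3 // ¬ Bijective f ∧ f ≠ f0} ≤ 20 := by
              have hlt : Fintype.card {f : Fin 3 → Fin 3 // ¬ Bijective f ∧ f ≠ f0}
                  < Fintype.card {f : Fin 3 → Fin 3 // ¬ Bijective f} := by
                refine Fintype.card_lt_of_injective_of_notMem
                  (fun g : {f : Fin 3 → Fin 3 // ¬ Bijective f ∧ f ≠ f0} =>
                    (⟨g.1, g.2.1⟩ : {f : Fin 3 → Fin 3 // ¬ Bijective f}))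
                  (fun a b hab => Subtype.ext (Subtype.mk_eq_mk.mp hab))
                  (b := ⟨f0, hf0n⟩) ?_
                rintro ⟨g, hgeq⟩
                exact g.2.2 (Subtype.mk_eq_mk.mp hgeq)
              have h21 : Fintype.card {f : Fin 3 → Fin 3 // ¬ Bijective f} = 21 := by
                have := card_nonbij 3
                rw [Nat.card_eq_fintype_card] at this
                rw [this]
                norm_num [Nat.factorial]
              rw [← Nat.card_eq_fintype_card] at hlt
              have h21' : (3:ℕ) ^ 3 - Nat.factorial 3 = 21 := by norm_num [Nat.factorial]
              omega
            calc Nat.card ↥(RS M)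
                ≤ Nat.card (↥(Subgroup.zpowers π) ⊕
                    {f : Fin 3 → Fin 3 // ¬ Bijective f ∧ f ≠ f0}) := by
                  apply Nat.card_le_card_of_injective
                    (fun f : ↥(RS M) =>
                      if h : Bijective f.1 then
                        Sum.inl ⟨Equiv.ofBijective f.1 h, hmem_pow f h⟩
                      else Sum.inr ⟨f.1, h, by
                        intro he
                        exact hf0 (he ▸ f.2)⟩)
                  intro a b hab
                  by_cases ha : Bijective a.1 <;> by_cases hb : Bijective b.1 <;>
                    simp only [ha, hb, dif_pos, dif_neg, not_false_iff] at hab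
                  · have h2 := Sum.inl.inj hab
                    have h3 : Equiv.ofBijective a.1 ha = Equiv.ofBijective b.1 hb :=
                      Subtype.mk_eq_mk.mp h2
                    exact Subtype.ext (congrArg (fun e : Equiv.Perm (Fin 3) => ⇑e) h3)
                  · exact absurd hab (by simp)
                  · exact absurd hab (by simp)
                  · exact Subtype.ext (Subtype.mk_eq_mk.mp (Sum.inr.inj hab))
              _ = Nat.card ↥(Subgroup.zpowers π) +
                    Nat.card {f : Fin 3 → Fin 3 // ¬ Bijective f ∧ f ≠ f0} :=
                  Nat.card_sum
              _ ≤ orderOf π + 20 := by rw [Nat.card_zpowers]; omega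
          have : (3:ℕ) ^ 3 - 3 * (3 - 1) / 2 = 24 := by norm_num
          omega
      · -- n ≥ 4
        have hn4 : 4 ≤ n := by omega
        have h2 := arith2 n hn4
        omega
    · -- no bijective letter: only the identity is a reachable bijection
      push_neg at hex
      have hbij_id : ∀ f : ↥(RS M), Bijective f.1 → f.1 = fun q => q := by
        intro f hb
        obtain ⟨w, hw⟩ := f.2
        cases w with
        | nil => exact hw.symm
        | cons σ w =>
            exfalso
            rw [← hw, TT_cons] at hb
            exact hex σ (Finite.injective_iff_bijective.mp (Injective.of_comp hb.1))
      have hRS : Nat.card ↥(RS M) ≤ 1 + (n ^ n - n.factorial) := by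
        have : (1:ℕ) = Nat.card Unit := by simp
        rw [this, ← card_nonbij n, ← Nat.card_sum]
        apply Nat.card_le_card_of_injective
          (fun f : ↥(RS M) =>
            if h : Bijective f.1 then Sum.inl () else Sum.inr ⟨f.1, h⟩)
        intro a b hab
        by_cases ha : Bijective a.1 <;> by_cases hb : Bijective b.1 <;>
          simp only [ha, hb, dif_pos, dif_neg, not_false_iff] at hab
        · exact Subtype.ext ((hbij_id a ha).trans (hbij_id b hb).symm)
        · exact absurd hab (by simp)
        · exact absurd hab (by simp)
        · exact Subtype.ext (Subtype.mk_eq_mk.mp (Sum.inr.inj hab))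
      have h3 := arith3 n hn
      omega

end Stmt12Aux

/-- for `n > 2` and any regular language `L` over an alphabet with at most
two letters with `sc L = n`, the bound for the square root is not attained:
`sc (√L) < n^n - n(n-1)/2`. -/
theorem stmt12 (n : ℕ) (hn : 2 < n) (Γ : Type) [Fintype Γ]
    (hΓ : Fintype.card Γ ≤ 2) (L : Language Γ)
    (hreg : ∃ m, recognizedBy L m) (hsc : sc L = n) :
    sc (sqrtLang L) < n ^ n - n * (n - 1) / 2 := by
  classical
  have hne : {m | recognizedBy L m}.Nonempty := hreg
  have hmem : recognizedBy L n := by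
    have h := Nat.sInf_mem hne
    rwa [show sInf {m | recognizedBy L m} = n from hsc] at h
  obtain ⟨M, hM⟩ := hmem
  have hacc : sqrtLang L = (Stmt12Aux.sqD M).accepts := by
    rw [Stmt12Aux.accepts_sqD, hM]
  have h1 : sc (sqrtLang L) ≤ Nat.card (Quotient (Stmt12Aux.st M)) := by
    rw [hacc]
    exact Stmt12Aux.sc_le_of_dfa _
  exact lt_of_le_of_lt h1 (Stmt12Aux.main_card M hn hΓ)
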